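/- For nonnegative integers m, k with 2k ≤ 2m, the identity ∑_{j=0}^{k} (2j+1)·[C(m,k−j)·C(m,k+j) − C(m,k−j−1)·C(m,k+j+1)] = C(2m, 2k) holds, expressing that the dimensions of the isotypic components of ⋀^{2k}(ℂ^m⊗ℂ^2) sum to its total dimension. -/

import Mathlib

/-- Binomial coefficient with integer lower index, with the convention that
`C a b = 0` when `b < 0` or `b > a`. -/
def intChoose (a : ℕ) (b : ℤ) : ℤ :=
  if 0 ≤ b ∧ b ≤ (a : ℤ) then (a.choose b.toNat : ℤ) else 0

lemma intChoose_of_nonneg (a : ℕ) (b : ℤ) (hb : 0 ≤ b) :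
    intChoose a b = (a.choose b.toNat : ℤ) := by
  unfold intChoose
  by_cases hab : b ≤ (a : ℤ)
  · simp [hb, hab]
  · push_neg at hab
    have : a < b.toNat := by omega
    simp [hb, hab.not_ge, Nat.choose_eq_zero_of_lt this]

lemma intChoose_of_neg (a : ℕ) (b : ℤ) (hb : b < 0) : intChoose a b = 0 := by
  unfold intChoose
  simp [hb.not_ge]

/-- Abel summation / telescoping lemma. -/
lemma abel_tele (g : ℕ → ℤ) (n : ℕ) :
    ∑ j ∈ Finset.range (n + 1), (2 * (j : ℤ) + 1) * (g j - g (j + 1))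
      = 2 * ∑ j ∈ Finset.range (n + 1), g j - g 0 - (2 * n + 1) * g (n + 1) := by
  induction n with
  | zero => simp; ring
  | succ n ih =>
    rw [Finset.sum_range_succ, ih, Finset.sum_range_succ (f := g) (n := n + 1)]
    push_cast
    ring

/-- The dimensions of the isotypic components of `⋀^{2k}(ℂ^m ⊗ ℂ²)` sum to its
total dimension: `∑_{j=0}^{k} (2j+1)·[C(m,k−j)·C(m,k+j) − C(m,k−j−1)·C(m,k+j+1)]
= C(2m, 2k)`. -/
theorem dim_sum_integer_components (m k : ℕ) (h : 2 * k ≤ 2 * m) :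
    ∑ j ∈ Finset.range (k + 1),
        (2 * (j : ℤ) + 1) *
          (intChoose m ((k : ℤ) - j) * intChoose m ((k : ℤ) + j)
            - intChoose m ((k : ℤ) - j - 1) * intChoose m ((k : ℤ) + j + 1))
      = ((2 * m).choose (2 * k) : ℤ) := by
  set g : ℕ → ℤ := fun j => intChoose m ((k : ℤ) - j) * intChoose m ((k : ℤ) + j) with hg
  -- rewrite summand as telescoping form
  have hsummand : ∀ j : ℕ,
      intChoose m ((k : ℤ) - j) * intChoose m ((k : ℤ) + j)
        - intChoose m ((k : ℤ) - j - 1) * intChoose m ((k : ℤ) + j + 1)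
      = g j - g (j + 1) := by
    intro j
    have h1 : (k : ℤ) - j - 1 = (k : ℤ) - (j + 1 : ℕ) := by push_cast; ring
    have h2 : (k : ℤ) + j + 1 = (k : ℤ) + (j + 1 : ℕ) := by push_cast; ring
    simp only [hg, h1, h2]
  simp only [hsummand]
  rw [abel_tele]
  -- g (k+1) = 0
  have hgk1 : g (k + 1) = 0 := by
    have hlt : ((k : ℤ) - (k + 1 : ℕ)) < 0 := by push_cast; omega
    simp only [hg]
    rw [intChoose_of_neg m _ hlt, zero_mul]
  rw [hgk1, mul_zero, sub_zero]
  -- g j in terms of Nat.choose for j ≤ k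
  have hgval : ∀ j : ℕ, j ≤ k → g j = (m.choose (k - j) * m.choose (k + j) : ℤ) := by
    intro j hj
    have h1 : (0 : ℤ) ≤ (k : ℤ) - j := by
      have : (j : ℤ) ≤ k := by exact_mod_cast hj
      omega
    rw [hg]
    simp only
    rw [intChoose_of_nonneg m _ h1, intChoose_of_nonneg m _ (by positivity)]
    have h3 : (k : ℤ) + (j : ℤ) = ((k + j : ℕ) : ℤ) := by push_cast; ring
    rw [Int.toNat_sub, h3, Int.toNat_natCast]
  -- Vandermonde
  have hv : ((2 * m).choose (2 * k) : ℤ)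
      = ∑ i ∈ Finset.range (2 * k + 1), (m.choose i * m.choose (2 * k - i) : ℤ) := by
    have := Nat.add_choose_eq m m (2 * k)
    rw [Finset.Nat.sum_antidiagonal_eq_sum_range_succ_mk] at this
    have h2m : 2 * m = m + m := by ring
    rw [h2m, this]
    push_cast
    rfl
  rw [hv]
  -- split range (2k+1) at k+1
  have hsplit : ∑ i ∈ Finset.range (2 * k + 1), (m.choose i * m.choose (2 * k - i) : ℤ)
      = ∑ i ∈ Finset.range (k + 1), (m.choose i * m.choose (2 * k - i) : ℤ)
        + ∑ i ∈ Finset.Ico (k + 1) (2 * k + 1), (m.choose i * m.choose (2 * k - i) : ℤ) := by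
    rw [Finset.range_eq_Ico, Finset.range_eq_Ico]
    exact (Finset.sum_Ico_consecutive (fun i => (m.choose i * m.choose (2 * k - i) : ℤ)) (Nat.zero_le (k + 1)) (by omega : k + 1 ≤ 2 * k + 1)).symm
  rw [hsplit]
  -- first part equals ∑ g via reflection
  have hfirst : ∑ i ∈ Finset.range (k + 1), (m.choose i * m.choose (2 * k - i) : ℤ)
      = ∑ j ∈ Finset.range (k + 1), g j := by
    rw [← Finset.sum_range_reflect (fun i => (m.choose i * m.choose (2 * k - i) : ℤ)) (k + 1)]
    apply Finset.sum_congr rfl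
    intro j hj
    simp only [Finset.mem_range] at hj
    rw [hgval j (by omega)]
    have e1 : k + 1 - 1 - j = k - j := by omega
    have e2 : 2 * k - (k - j) = k + j := by omega
    rw [e1, e2]
  -- second part equals ∑_{j=1}^{k} g j = ∑ g - g 0
  have hsecond : ∑ i ∈ Finset.Ico (k + 1) (2 * k + 1), (m.choose i * m.choose (2 * k - i) : ℤ)
      = ∑ j ∈ Finset.range (k + 1), g j - g 0 := by
    rw [Finset.sum_Ico_eq_sum_range]
    have hn : 2 * k + 1 - (k + 1) = k := by omega
    rw [hn]
    have : ∀ j ∈ Finset.range k, (m.choose (k + 1 + j) * m.choose (2 * k - (k + 1 + j)) : ℤ)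
        = g (j + 1) := by
      intro j hj
      simp only [Finset.mem_range] at hj
      rw [hgval (j + 1) (by omega)]
      have e1 : 2 * k - (k + 1 + j) = k - (j + 1) := by omega
      have e2 : k + 1 + j = k + (j + 1) := by omega
      rw [e1, e2, mul_comm]
    rw [Finset.sum_congr rfl this, Finset.sum_range_succ' g k]
    ring
  rw [hfirst, hsecond]
  ring
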